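/- Let G be a finite group with no element of order pq for a prime q ≠ p, and S an abelian Sylow p-subgroup. Then for every nontrivial x ∈ S, the centralizer C_G(x) equals S. -/

import Mathlib

theorem stmt9 (p : ℕ) [Fact p.Prime] (G : Type*) [Group G] [Finite G]
    (hiso : ∀ g : G, ∀ q : ℕ, q.Prime → q ≠ p → orderOf g ≠ p * q)
    (S : Sylow p G) (hab : IsMulCommutative (S : Subgroup G)) :
    ∀ x ∈ (S : Subgroup G), x ≠ 1 → Subgroup.centralizer {x} = (S : Subgroup G) := by
  intro x hxS hx1
  have hp : p.Prime := Fact.out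
  obtain ⟨m, hm⟩ := IsPGroup.iff_orderOf.mp S.isPGroup' (⟨x, hxS⟩ : (S : Subgroup G))
  rw [Subgroup.orderOf_mk] at hm
  have hm0 : m ≠ 0 := by
    rintro rfl
    simp only [pow_zero, orderOf_eq_one_iff] at hm
    exact hx1 hm
  have hpdvd : p ∣ orderOf x := hm ▸ dvd_pow_self p hm0
  set x' := x ^ (orderOf x / p) with hx'
  have hox' : orderOf x' = p :=
    orderOf_pow_orderOf_div (orderOf_pos x).ne' hpdvd
  -- the centralizer is a p-group
  have hC : IsPGroup p (Subgroup.centralizer {x}) := by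
    rw [IsPGroup.iff_orderOf]
    rintro ⟨g, hg⟩
    rw [Subgroup.orderOf_mk]
    have hg' : g * x = x * g := Subgroup.mem_centralizer_singleton_iff.mp hg
    have hcxg : Commute x g := hg'.symm
    have key : ∀ {q : ℕ}, q.Prime → q ∣ orderOf g → q = p := by
      intro q hq hdvd
      by_contra hqp
      set y := g ^ (orderOf g / q) with hy
      have hoy : orderOf y = q := orderOf_pow_orderOf_div (orderOf_pos g).ne' hdvd
      have hcomm : Commute x' y := hcxg.pow_pow _ _
      have hcop : Nat.Coprime (orderOf x') (orderOf y) := by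
        rw [hox', hoy]
        exact (Nat.coprime_primes hp hq).mpr (Ne.symm hqp)
      have := hcomm.orderOf_mul_eq_mul_orderOf_of_coprime hcop
      rw [hox', hoy] at this
      exact hiso (x' * y) q hq hqp this
    refine ⟨(orderOf g).primeFactorsList.length,
      Nat.eq_prime_pow_of_unique_prime_dvd (orderOf_pos g).ne' key⟩
  -- S is contained in the centralizer
  have hle : (S : Subgroup G) ≤ Subgroup.centralizer {x} := by
    intro s hs
    exact Subgroup.mem_centralizer_singleton_iff.mpr
      (Subgroup.mul_comm_of_mem_isMulCommutative _ hs hxS)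
  exact S.is_maximal' hC hle
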